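/- Let z ∈ R^N be a nonzero vector, S ⊆ {1,...,N} with |S| ≤ k, and 1 < q < ∞. If ‖z_S‖₁ ≥ ‖z_{S^c}‖₁, then k ≥ 2^{q/(1-q)} s_q(z), i.e., ‖z‖₁ ≤ 2 k^{1-1/q} ‖z‖_q. -/

import Mathlib

open Finset Matrix

noncomputable def l1 {N : ℕ} (z : Fin N → ℝ) : ℝ := ∑ i, |z i|
noncomputable def lq {N : ℕ} (q : ℝ) (z : Fin N → ℝ) : ℝ := (∑ i, |z i| ^ q) ^ (1/q)
noncomputable def l2 {m : ℕ} (v : Fin m → ℝ) : ℝ := Real.sqrt (∑ i, (v i)^2)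
noncomputable def linf {N : ℕ} (z : Fin N → ℝ) : ℝ := ⨆ i, |z i|
open scoped Classical in
noncomputable def l0 {N : ℕ} (z : Fin N → ℝ) : ℕ := (Finset.univ.filter (fun i => z i ≠ 0)).card
noncomputable def sparsityQ {N : ℕ} (q : ℝ) (z : Fin N → ℝ) : ℝ := (l1 z / lq q z) ^ (q/(q-1))
noncomputable def cmsv {m N : ℕ} (q s : ℝ) (A : Matrix (Fin m) (Fin N) ℝ) : ℝ :=
  sInf { r | ∃ z : Fin N → ℝ, z ≠ 0 ∧ sparsityQ q z ≤ s ∧ r = l2 (A.mulVec z) / lq q z }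

theorem stmt3 {N k : ℕ} (z : Fin N → ℝ) (hz : z ≠ 0) (q : ℝ) (hq : 1 < q)
    (S : Finset (Fin N)) (hS : S.card ≤ k)
    (h : ∑ i ∈ Sᶜ, |z i| ≤ ∑ i ∈ S, |z i|) :
    (2:ℝ) ^ (q/(1-q)) * sparsityQ q z ≤ (k : ℝ) ∧
      l1 z ≤ 2 * (k : ℝ) ^ (1 - 1/q) * lq q z := by
  have hq0 : (0:ℝ) < q := lt_trans zero_lt_one hq
  have hq1 : q - 1 > 0 := sub_pos.2 hq
  -- conjugate exponents
  have hpq : Real.HolderConjugate q (q/(q-1)) :=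
    (Real.holderConjugate_iff_eq_conjExponent hq).2 rfl
  have hpq' : Real.HolderConjugate (q/(q-1)) q := hpq.symm
  -- lq q z > 0
  obtain ⟨i0, hi0⟩ : ∃ i, z i ≠ 0 := by
    by_contra hc
    push_neg at hc
    exact hz (funext hc)
  have hsum_pos : (0:ℝ) < ∑ i, |z i| ^ q := by
    have : (0:ℝ) < |z i0| ^ q := Real.rpow_pos_of_pos (abs_pos.2 hi0) q
    refine lt_of_lt_of_le this (Finset.single_le_sum (f := fun i => |z i| ^ q) ?_ (mem_univ i0))
    intro i _
    exact Real.rpow_nonneg (abs_nonneg _) q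
  have hlq_pos : 0 < lq q z := Real.rpow_pos_of_pos hsum_pos _
  -- Hölder on S
  have holder : ∑ i ∈ S, |z i| ≤ (S.card : ℝ) ^ (1 - 1/q) * lq q z := by
    have H := Real.inner_le_Lp_mul_Lq_of_nonneg S hpq'
      (f := fun _ => (1:ℝ)) (g := fun i => |z i|)
      (fun i _ => zero_le_one) (fun i _ => abs_nonneg _)
    simp only [one_mul] at H
    have h1 : ∑ i ∈ S, (1:ℝ) ^ (q/(q-1)) = (S.card : ℝ) := by
      simp [Real.one_rpow]
    rw [h1] at H
    refine le_trans H (mul_le_mul ?_ ?_ ?_ ?_)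
    · rw [show (1:ℝ) / (q/(q-1)) = 1 - 1/q by field_simp]
    · -- extend sum over S to univ
      apply Real.rpow_le_rpow (Finset.sum_nonneg fun i _ => Real.rpow_nonneg (abs_nonneg _) q)
      · exact Finset.sum_le_sum_of_subset_of_nonneg (subset_univ S)
          (fun i _ _ => Real.rpow_nonneg (abs_nonneg _) q)
      · positivity
    · exact Real.rpow_nonneg (Finset.sum_nonneg fun i _ => Real.rpow_nonneg (abs_nonneg _) q) _
    · exact Real.rpow_nonneg (Nat.cast_nonneg _) _
  have hexp_nonneg : (0:ℝ) ≤ 1 - 1/q := by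
    rw [sub_nonneg]
    rw [div_le_one hq0]
    linarith
  have hcard : ((S.card : ℝ)) ^ (1 - 1/q) ≤ (k:ℝ) ^ (1 - 1/q) :=
    Real.rpow_le_rpow (Nat.cast_nonneg _) (Nat.cast_le.2 hS) hexp_nonneg
  -- second conclusion
  have h2 : l1 z ≤ 2 * (k : ℝ) ^ (1 - 1/q) * lq q z := by
    have hsplit : l1 z = (∑ i ∈ S, |z i|) + ∑ i ∈ Sᶜ, |z i| :=
      (Finset.sum_add_sum_compl S _).symm
    have : l1 z ≤ 2 * ∑ i ∈ S, |z i| := by rw [hsplit]; linarith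
    calc l1 z ≤ 2 * ∑ i ∈ S, |z i| := this
      _ ≤ 2 * ((S.card : ℝ) ^ (1 - 1/q) * lq q z) := by linarith
      _ ≤ 2 * ((k : ℝ) ^ (1 - 1/q) * lq q z) := by
          have := mul_le_mul_of_nonneg_right hcard hlq_pos.le
          linarith
      _ = 2 * (k : ℝ) ^ (1 - 1/q) * lq q z := by ring
  refine ⟨?_, h2⟩
  -- first conclusion
  set e := q/(q-1) with he
  have he_pos : 0 < e := div_pos hq0 hq1
  have hratio : l1 z / lq q z ≤ 2 * (k:ℝ) ^ (1 - 1/q) := by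
    rw [div_le_iff₀ hlq_pos]
    exact h2
  have hratio_nonneg : 0 ≤ l1 z / lq q z := by
    apply div_nonneg _ hlq_pos.le
    exact Finset.sum_nonneg fun i _ => abs_nonneg _
  have hpow : (l1 z / lq q z) ^ e ≤ (2 * (k:ℝ) ^ (1 - 1/q)) ^ e :=
    Real.rpow_le_rpow hratio_nonneg hratio he_pos.le
  have hrhs : (2 * (k:ℝ) ^ (1 - 1/q)) ^ e = 2 ^ e * (k:ℝ) := by
    rw [Real.mul_rpow (by norm_num) (Real.rpow_nonneg (Nat.cast_nonneg _) _),
      ← Real.rpow_mul (Nat.cast_nonneg _),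
      show (1 - 1/q) * e = 1 by rw [he]; field_simp, Real.rpow_one]
  have key : sparsityQ q z ≤ 2 ^ e * (k:ℝ) := by
    rw [sparsityQ, ← he]
    rw [hrhs] at hpow
    exact hpow
  have h2e : (2:ℝ) ^ (q/(1-q)) = ((2:ℝ) ^ e)⁻¹ := by
    rw [← Real.rpow_neg (by norm_num : (0:ℝ) ≤ 2)]
    congr 1
    rw [he, show (1:ℝ)-q = -(q-1) by ring, div_neg]
  rw [h2e]
  have h2e_pos : (0:ℝ) < 2 ^ e := Real.rpow_pos_of_pos (by norm_num) e
  rw [inv_mul_le_iff₀ h2e_pos]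
  calc sparsityQ q z ≤ 2 ^ e * (k:ℝ) := key
    _ = 2 ^ e * (k:ℝ) := rfl
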